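/- Let λˢ < 0 be a real root of Δ₀ (with hypotheses d ≥ 0, c ∈ ℝ, a < 0, 0 < b < −a, and J as usual with J > 0 on an open interval). Then for every μ ≠ 0, Δ₀(λˢ + iμ) ≠ 0. That is, the only zero of Δ₀ on the vertical line Re z = λˢ is λˢ itself. -/

import Mathlib

open MeasureTheory Real Complex

theorem no_other_zero_on_vertical_line (J : ℝ → ℝ)
    (hJc : Continuous J) (hJeven : ∀ s, J (-s) = J s) (hJnonneg : ∀ s, 0 ≤ J s)
    (hJint : (∫ s : ℝ, J s) = 1)
    (hJmom : ∀ ρ : ℝ, Integrable (fun s => J s * Real.exp (ρ * s)))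
    (hJsupp : ∃ x y : ℝ, x < y ∧ ∀ s ∈ Set.Ioo x y, 0 < J s)
    (d c a b : ℝ) (hd : 0 ≤ d) (ha : a < 0) (hb : 0 < b) (hba : b < -a)
    (Δ : ℂ → ℂ)
    (hΔ : Δ = fun z => (d:ℂ) * z^2 - (c:ℂ) * z + (a:ℂ) +
      (b:ℂ) * ∫ s : ℝ, (J s : ℂ) * Complex.exp (-(z * (s:ℂ))))
    (lams : ℝ) (hlams : lams < 0) (hroot : Δ (lams : ℂ) = 0) :
    ∀ μ : ℝ, μ ≠ 0 → Δ ((lams : ℂ) + (μ:ℂ) * Complex.I) ≠ 0 := by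
  intro μ hμ h0
  subst hΔ
  simp only at hroot h0
  set g : ℝ → ℝ := fun s => J s * Real.exp (-lams * s) with hg
  have hgint : Integrable g := hJmom (-lams)
  have hgnn : ∀ s, 0 ≤ g s := fun s => mul_nonneg (hJnonneg s) (Real.exp_pos _).le
  -- the real root equation
  have hI0 : (∫ s : ℝ, (J s : ℂ) * Complex.exp (-((lams:ℂ) * (s:ℂ)))) = ((∫ s, g s : ℝ) : ℂ) := by
    have heq : (fun s : ℝ => (J s : ℂ) * Complex.exp (-((lams:ℂ) * (s:ℂ))))
        = fun s : ℝ => ((g s : ℝ) : ℂ) := by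
      funext s
      rw [hg]
      push_cast [Complex.ofReal_exp]
      try ring
    rw [heq]
    exact integral_ofReal
  rw [hI0] at hroot
  have hroot' : d * lams ^ 2 - c * lams + a + b * ∫ s, g s = 0 := by
    exact_mod_cast hroot
  -- complex integrand with μ
  set z : ℂ := (lams : ℂ) + (μ:ℂ) * Complex.I with hz
  set f : ℝ → ℂ := fun s => (J s : ℂ) * Complex.exp (-(z * (s:ℂ))) with hf
  have hfm : AEStronglyMeasurable f volume := by
    refine Continuous.aestronglyMeasurable ?_
    exact (Complex.continuous_ofReal.comp hJc).mul
      (Complex.continuous_exp.comp ((continuous_const.mul Complex.continuous_ofReal).neg))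
  have hzre : z.re = lams := by rw [hz]; simp
  have hzim : z.im = μ := by rw [hz]; simp
  have hwre : ∀ s : ℝ, (-(z * (s:ℂ))).re = -lams * s := by
    intro s; simp [Complex.mul_re, hzre, hzim]
  have hwim : ∀ s : ℝ, (-(z * (s:ℂ))).im = -(μ * s) := by
    intro s; simp [Complex.mul_im, hzre, hzim]
  have hfint : Integrable f := by
    refine hgint.mono' hfm (Filter.Eventually.of_forall fun s => ?_)
    rw [hg]
    simp only [hf]
    rw [norm_mul, Complex.norm_real, Real.norm_eq_abs, _root_.abs_of_nonneg (hJnonneg s),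
      Complex.norm_exp, hwre]
  have hre : ∀ s, (f s).re = g s * Real.cos (μ * s) := by
    intro s
    simp only [hf, hg, Complex.mul_re, Complex.ofReal_re, Complex.ofReal_im, Complex.exp_re,
      hwre, hwim, Real.cos_neg]
    ring
  -- h := g * (1 - cos) nonneg integrable
  set h : ℝ → ℝ := fun s => g s * (1 - Real.cos (μ * s)) with hh
  have hcosc : Continuous fun s : ℝ => Real.cos (μ * s) :=
    Real.continuous_cos.comp (continuous_const.mul continuous_id)
  have hcosint : Integrable (fun s => g s * Real.cos (μ * s)) := by
    have := hgint.bdd_mul (f := fun s => Real.cos (μ * s))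
      hcosc.aestronglyMeasurable
      (c := 1) (Filter.Eventually.of_forall fun s => by rw [Real.norm_eq_abs]; exact Real.abs_cos_le_one _)
    simpa [mul_comm] using this
  have hhint : Integrable h := by
    have heq : h = fun s => g s - g s * Real.cos (μ * s) := by funext s; rw [hh]; ring
    rw [heq]; exact hgint.sub hcosint
  have hhnn : ∀ s, 0 ≤ h s := fun s =>
    mul_nonneg (hgnn s) (by linarith [Real.cos_le_one (μ * s)])
  -- find point where h > 0
  obtain ⟨x, y, hxy, hJpos⟩ := hJsupp
  have hs0 : ∃ s₀ ∈ Set.Ioo x y, Real.cos (μ * s₀) < 1 := by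
    by_contra hc
    push_neg at hc
    have hcos1 : ∀ s ∈ Set.Ioo x y, Real.cos (μ * s) = 1 := fun s hs =>
      le_antisymm (Real.cos_le_one _) (hc s hs)
    set u : ℝ := (x + y) / 2 with hu
    set δ : ℝ := min ((y - x) / 4) (π / |μ|) with hδ
    have hμpos : 0 < |μ| := abs_pos.mpr hμ
    have hδpos : 0 < δ := lt_min (by linarith) (div_pos Real.pi_pos hμpos)
    have hu1 : u ∈ Set.Ioo x y := by constructor <;> (rw [hu]; linarith)
    have hu2 : u + δ ∈ Set.Ioo x y := by
      constructor
      · have : x < u := hu1.1; linarith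
      · have h4 : δ ≤ (y - x) / 4 := min_le_left _ _
        rw [hu]; linarith
    obtain ⟨n, hn⟩ := (Real.cos_eq_one_iff _).mp (hcos1 u hu1)
    obtain ⟨m, hm⟩ := (Real.cos_eq_one_iff _).mp (hcos1 (u + δ) hu2)
    have hdiff : ((m : ℝ) - n) * (2 * π) = μ * δ := by
      have heq2 : μ * (u + δ) - μ * u = μ * δ := by ring
      rw [← heq2, ← hn, ← hm]; ring
    have habs : |μ * δ| < 2 * π := by
      have hδle : δ ≤ π / |μ| := min_le_right _ _
      rw [abs_mul, abs_of_pos hδpos]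
      calc |μ| * δ ≤ |μ| * (π / |μ|) := mul_le_mul_of_nonneg_left hδle hμpos.le
        _ = π := by field_simp
        _ < 2 * π := by linarith [Real.pi_pos]
    have hμδ : μ * δ ≠ 0 := mul_ne_zero hμ hδpos.ne'
    have hmn : m ≠ n := by
      intro hmn; apply hμδ; rw [← hdiff, hmn]; ring
    have h1mn : (1 : ℝ) ≤ |(m : ℝ) - n| := by
      have hint1 : (1 : ℤ) ≤ |m - n| := Int.one_le_abs (sub_ne_zero.mpr hmn)
      have : ((1:ℤ):ℝ) ≤ (|m - n| : ℤ) := by exact_mod_cast hint1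
      push_cast at this
      convert this using 2
    have : 2 * π ≤ |μ * δ| := by
      have h2pi : |2 * π| = 2 * π := abs_of_pos (by positivity)
      rw [← hdiff, abs_mul, h2pi]
      nlinarith [Real.pi_pos]
    linarith
  obtain ⟨s₀, hs₀mem, hs₀cos⟩ := hs0
  have hhpos : 0 < h s₀ := by
    apply mul_pos
    · exact mul_pos (hJpos s₀ hs₀mem) (Real.exp_pos _)
    · linarith
  have hhcont : Continuous h := by
    refine Continuous.mul ?_ (continuous_const.sub hcosc)
    exact hJc.mul (Real.continuous_exp.comp (continuous_const.mul continuous_id))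
  have hintpos : 0 < ∫ s, h s := by
    rw [integral_pos_iff_support_of_nonneg hhnn hhint]
    have hopen : IsOpen {s | 0 < h s} := isOpen_lt continuous_const hhcont
    have hsub : {s | 0 < h s} ⊆ Function.support h := fun s hs => ne_of_gt hs
    calc (0:ENNReal) < volume {s | 0 < h s} := hopen.measure_pos volume ⟨s₀, hhpos⟩
      _ ≤ volume (Function.support h) := measure_mono hsub
  have hlt : (∫ s, g s * Real.cos (μ * s)) < ∫ s, g s := by
    have heq3 : (∫ s, g s) - (∫ s, g s * Real.cos (μ * s)) = ∫ s, h s := by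
      rw [← integral_sub hgint hcosint]
      refine integral_congr_ae (Filter.Eventually.of_forall fun s => ?_)
      rw [hh]; ring
    linarith
  -- take real part of h0
  have hz2re : (z ^ 2).re = lams ^ 2 - μ ^ 2 := by
    rw [sq, Complex.mul_re, hzre, hzim]; ring
  have hIre : (∫ s, f s).re = ∫ s, g s * Real.cos (μ * s) := by
    have hint := integral_re (𝕜 := ℂ) hfint
    simp only [RCLike.re_to_complex] at hint
    rw [← hint]
    exact integral_congr_ae (Filter.Eventually.of_forall fun s => (hre s))
  have hre0 : d * (lams ^ 2 - μ ^ 2) - c * lams + a + b * ∫ s, g s * Real.cos (μ * s) = 0 := by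
    have hcre := congrArg Complex.re h0
    simp only [Complex.add_re, Complex.sub_re, Complex.mul_re, Complex.ofReal_re,
      Complex.ofReal_im, Complex.zero_re, hz2re, hzre, zero_mul, sub_zero] at hcre
    rw [hIre] at hcre
    linarith
  have h1 : b * (∫ s, g s * Real.cos (μ * s)) < b * ∫ s, g s :=
    mul_lt_mul_of_pos_left hlt hb
  nlinarith [mul_nonneg hd (sq_nonneg μ)]
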